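/- In a Win-by-Two tiebreaker with p = q, the expected length under the Standard Rule is 2/p (for 0 < p \leq 1) and under the Catch-Up Rule is 2/(1-p) (for 0 \leq p < 1); these are the solutions of E = 2[p^2 + (1-p)p] + [p(1-p) + (1-p)^2](E + 2) and E = 2[p(1-p) + (1-p)^2] + [p^2 + (1-p)p](E + 2) respectively. Hence EL_CR > EL_SR if and only if p > 1/2. -/
import Mathlib

/-- In a Win-by-Two tiebreaker (both players win on their own serve with probability
`p`), the expected length under the Standard Rule is `2/p` for `0 < p ≤ 1`: it is the
unique solution of `E = 2[p² + (1-p)p] + [p(1-p) + (1-p)²](E+2)`.  Under the Catch-Up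
Rule it is `2/(1-p)` for `0 ≤ p < 1`: the unique solution of
`E = 2[p(1-p) + (1-p)²] + [p² + (1-p)p](E+2)`.  Hence for `0 < p < 1`,
`EL_CR > EL_SR` if and only if `p > 1/2`. -/
theorem tiebreaker_expected_lengths (p : ℝ) :
    (0 < p → p ≤ 1 →
      2 / p = 2 * (p ^ 2 + (1 - p) * p) + (p * (1 - p) + (1 - p) ^ 2) * (2 / p + 2) ∧
      ∀ E : ℝ, E = 2 * (p ^ 2 + (1 - p) * p) + (p * (1 - p) + (1 - p) ^ 2) * (E + 2)
        → E = 2 / p) ∧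
    (0 ≤ p → p < 1 →
      2 / (1 - p)
          = 2 * (p * (1 - p) + (1 - p) ^ 2) + (p ^ 2 + (1 - p) * p) * (2 / (1 - p) + 2) ∧
      ∀ E : ℝ, E = 2 * (p * (1 - p) + (1 - p) ^ 2) + (p ^ 2 + (1 - p) * p) * (E + 2)
        → E = 2 / (1 - p)) ∧
    (0 < p → p < 1 → (2 / (1 - p) > 2 / p ↔ p > 1 / 2)) := by
  refine ⟨fun hp _ => ⟨?_, fun E hE => ?_⟩, fun _ hq => ⟨?_, fun E hE => ?_⟩,
    fun hp hq => ?_⟩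
  · field_simp
    ring
  · have hne : p ≠ 0 := ne_of_gt hp
    field_simp
    nlinarith [hE]
  · have hne : (1 : ℝ) - p ≠ 0 := by linarith
    field_simp
    ring
  · have hne : (1 : ℝ) - p ≠ 0 := by linarith
    field_simp
    nlinarith [hE]
  · have h1 : (0:ℝ) < 1 - p := by linarith
    rw [gt_iff_lt, div_lt_div_iff₀ hp h1]
    constructor <;> intro h <;> nlinarith
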